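/- Let n ≥ 1, r ≥ 2, and let J ⊊ S = ℂ[α_0,…,α_n] be a proper homogeneous ideal such that H_{S/J}(k) ≤ H_{S/J}(k+1) for every k ≥ 0 and H_{S/J}(k) = r for all sufficiently large k. Let a be the smallest integer with dim_ℂ S_a ≥ r and b the largest integer with H_{S/J}(b) ≠ r. For a ≤ k ≤ b let n_k be the smallest integer such that W_k := (J_k)^⊥ + span(the n_k largest monomials of S_k with respect to the fixed monomial order) has dimension r, and define the graded subspace I ⊆ S by I_k = 0 for k < a, I_k = (W_k)^⊥ for a ≤ k ≤ b, and I_k = J_k for k > b. Then dim_ℂ (S/I)_k = min(dim_ℂ S_k, r) for every k ≥ 0. -/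

import Mathlib

open MvPolynomial

set_option maxHeartbeats 1000000
set_option synthInstance.maxHeartbeats 400000

noncomputable section

/-- The standard graded polynomial ring `S = ℂ[α_0,…,α_n]`. -/
abbrev PS (n : ℕ) : Type := MvPolynomial (Fin (n + 1)) ℂ

/-- The space `S_k` of homogeneous polynomials of degree `k`. -/
def hsub (n k : ℕ) : Submodule ℂ (PS n) := homogeneousSubmodule (Fin (n + 1)) ℂ k

/-- The degree-`k` graded piece `J_k = J ∩ S_k` of an ideal. -/
def idealPiece (n : ℕ) (J : Ideal (PS n)) (k : ℕ) : Submodule ℂ (PS n) :=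
  Submodule.restrictScalars ℂ J ⊓ hsub n k

/-- A homogeneous ideal: `J = ⊕_k J_k`. -/
def IsHomog (n : ℕ) (J : Ideal (PS n)) : Prop :=
  Submodule.restrictScalars ℂ J = ⨆ k : ℕ, idealPiece n J k

/-- The Hilbert function of `S/J`: `H_{S/J}(k) = dim S_k − dim J_k`. -/
def HF (n : ℕ) (J : Ideal (PS n)) (k : ℕ) : ℕ :=
  Module.finrank ℂ ↥(hsub n k) - Module.finrank ℂ ↥(idealPiece n J k)

/-- Pairing against `f` for the bilinear form making the monomials orthonormal:
`g ↦ ⟨g, f⟩ = ∑_u g_u f_u`. -/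
def pairLM (n : ℕ) (f : PS n) : PS n →ₗ[ℂ] ℂ :=
  ∑ u ∈ f.support, f.coeff u • lcoeff ℂ u

/-- The orthogonal complement of `U` inside `S_k` with respect to the bilinear form making the
monomials an orthonormal basis. -/
def perp (n k : ℕ) (U : Submodule ℂ (PS n)) : Submodule ℂ (PS n) :=
  hsub n k ⊓ ⨅ f ∈ U, LinearMap.ker (pairLM n f)

/-- The span of a finite set of monomials. -/
def spanMon (n : ℕ) (M : Finset (Fin (n + 1) →₀ ℕ)) : Submodule ℂ (PS n) :=
  Submodule.span ℂ {p : PS n | ∃ u ∈ M, p = monomial u 1}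

/-- `M` is the set of the `|M|` largest degree-`k` monomials: all its elements have degree `k`
and dominate every degree-`k` monomial outside of `M`. -/
def TopSeg (n k : ℕ) (lo : LinearOrder (Fin (n + 1) →₀ ℕ))
    (M : Finset (Fin (n + 1) →₀ ℕ)) : Prop :=
  (∀ u ∈ M, ∑ j, u j = k) ∧
    ∀ u ∈ M, ∀ v : Fin (n + 1) →₀ ℕ, (∑ j, v j = k) → v ∉ M → lo.lt v u

/-- `W_k = (J_k)^⊥ + span(the given monomials in degree k)`. -/
def Wsp (n : ℕ) (J : Ideal (PS n)) (M : ℕ → Finset (Fin (n + 1) →₀ ℕ)) (k : ℕ) :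
    Submodule ℂ (PS n) :=
  perp n k (idealPiece n J k) ⊔ spanMon n (M k)

/-- The degree-`k` piece of the ideal `I`: `0` for `k < a`, `(W_k)^⊥` for `a ≤ k ≤ b`,
and `J_k` for `k > b`. -/
def Ipiece (n : ℕ) (J : Ideal (PS n)) (M : ℕ → Finset (Fin (n + 1) →₀ ℕ)) (a b k : ℕ) :
    Submodule ℂ (PS n) :=
  (⨆ _ : a ≤ k ∧ k ≤ b, perp n k (Wsp n J M k)) ⊔ (⨆ _ : b < k, idealPiece n J k)


section Aux

open Module Submodule

lemma aux_degree_eq_sum {n : ℕ} (u : Fin (n + 1) →₀ ℕ) : u.degree = ∑ j, u j :=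
  Finset.sum_subset (Finset.subset_univ _) fun _ _ hi => Finsupp.notMem_support_iff.mp hi

lemma aux_hsub_le_span (n k : ℕ) :
    hsub n k ≤ Submodule.span ℂ
      ((fun d => (monomial d 1 : PS n)) '' {d | Finsupp.degree d ≤ k}) := by
  intro p hp
  rw [← p.support_sum_monomial_coeff]
  refine Submodule.sum_mem _ fun d hd => ?_
  have hph : p.IsHomogeneous k := (mem_homogeneousSubmodule _ _).mp hp
  have hdeg : Finsupp.degree d = k := by
    rw [Finsupp.degree_eq_weight_one]
    exact hph (MvPolynomial.mem_support_iff.mp hd)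
  have : (monomial d (coeff d p) : PS n) = coeff d p • monomial d 1 := by
    rw [smul_monomial, smul_eq_mul, mul_one]
  rw [this]
  exact Submodule.smul_mem _ _ (Submodule.subset_span ⟨d, le_of_eq hdeg, rfl⟩)

instance aux_hsub_fd (n k : ℕ) : FiniteDimensional ℂ ↥(hsub n k) := by
  have hfin : {d : Fin (n + 1) →₀ ℕ | Finsupp.degree d ≤ k}.Finite :=
    Finsupp.finite_of_degree_le k
  have : FiniteDimensional ℂ
      ↥(Submodule.span ℂ ((fun d => (monomial d 1 : PS n)) '' {d | Finsupp.degree d ≤ k})) :=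
    FiniteDimensional.span_of_finite ℂ (hfin.image _)
  exact Submodule.finiteDimensional_of_le (aux_hsub_le_span n k)

lemma aux_pair_apply {n : ℕ} (f g : PS n) :
    pairLM n f g = ∑ u ∈ f.support, f.coeff u * g.coeff u := by
  simp [pairLM, LinearMap.sum_apply, LinearMap.smul_apply, lcoeff_apply, smul_eq_mul]

lemma aux_pair_symm {n : ℕ} (f g : PS n) : pairLM n f g = pairLM n g f := by
  rw [aux_pair_apply, aux_pair_apply]
  rw [show (∑ u ∈ f.support, f.coeff u * g.coeff u)
      = ∑ u ∈ f.support ∪ g.support, f.coeff u * g.coeff u from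
    Finset.sum_subset Finset.subset_union_left (fun u _ hu => by
      rw [MvPolynomial.notMem_support_iff.mp hu, zero_mul])]
  rw [show (∑ u ∈ g.support, g.coeff u * f.coeff u)
      = ∑ u ∈ f.support ∪ g.support, g.coeff u * f.coeff u from
    Finset.sum_subset Finset.subset_union_right (fun u _ hu => by
      rw [MvPolynomial.notMem_support_iff.mp hu, zero_mul])]
  exact Finset.sum_congr rfl fun u _ => mul_comm _ _

lemma aux_pair_monomial {n : ℕ} (u : Fin (n + 1) →₀ ℕ) (f : PS n) :
    pairLM n (monomial u 1) f = f.coeff u := by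
  rw [aux_pair_apply]
  simp [support_monomial, coeff_monomial]

lemma aux_pair_monomial' {n : ℕ} (f : PS n) (u : Fin (n + 1) →₀ ℕ) :
    pairLM n f (monomial u 1) = f.coeff u := by
  rw [aux_pair_symm, aux_pair_monomial]

/-- The pairing as a bilinear form on `S_k`. -/
def pairB (n k : ℕ) : LinearMap.BilinForm ℂ ↥(hsub n k) :=
  LinearMap.mk₂ ℂ (fun x y => pairLM n x.1 y.1)
    (fun x x' y => by
      show pairLM n (x.1 + x'.1) y.1 = pairLM n x.1 y.1 + pairLM n x'.1 y.1
      rw [aux_pair_symm, map_add, aux_pair_symm (y.1) x.1, aux_pair_symm (y.1) x'.1])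
    (fun c x y => by
      show pairLM n (c • x.1) y.1 = c • pairLM n x.1 y.1
      rw [aux_pair_symm, map_smul, aux_pair_symm (y.1) x.1])
    (fun x y y' => by
      show pairLM n x.1 (y.1 + y'.1) = pairLM n x.1 y.1 + pairLM n x.1 y'.1
      rw [map_add])
    (fun c x y => by
      show pairLM n x.1 (c • y.1) = c • pairLM n x.1 y.1
      rw [map_smul])

lemma aux_pairB_apply {n k : ℕ} (x y : ↥(hsub n k)) :
    pairB n k x y = pairLM n x.1 y.1 := rfl

lemma aux_pairB_refl (n k : ℕ) : (pairB n k).IsRefl := by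
  intro x y h
  rw [aux_pairB_apply] at h ⊢
  rw [aux_pair_symm]
  exact h

lemma aux_pairB_nondeg (n k : ℕ) : (pairB n k).Nondegenerate := by
  refine (LinearMap.IsRefl.nondegenerate_iff_separatingLeft (aux_pairB_refl n k)).mpr ?_
  intro x hx
  have hx' : ∀ d, coeff d (x.1 : PS n) = 0 := by
    intro d
    by_contra hd
    have hxh : (x.1 : PS n).IsHomogeneous k := (mem_homogeneousSubmodule _ _).mp x.2
    have hdeg : Finsupp.degree d = k := by
      rw [Finsupp.degree_eq_weight_one]; exact hxh hd
    have hy : (monomial d 1 : PS n) ∈ hsub n k :=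
      (mem_homogeneousSubmodule _ _).mpr (isHomogeneous_monomial 1 hdeg)
    have h0 := hx ⟨monomial d 1, hy⟩
    rw [aux_pairB_apply, aux_pair_monomial'] at h0
    exact hd h0
  exact Subtype.ext (MvPolynomial.ext _ _ fun d => by simp [hx' d])

lemma aux_perp_le (n k : ℕ) (U : Submodule ℂ (PS n)) : perp n k U ≤ hsub n k :=
  inf_le_left

lemma aux_mem_perp {n k : ℕ} {U : Submodule ℂ (PS n)} {p : PS n} :
    p ∈ perp n k U ↔ p ∈ hsub n k ∧ ∀ f ∈ U, pairLM n f p = 0 := by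
  simp [perp, Submodule.mem_inf, Submodule.mem_iInf, LinearMap.mem_ker]

lemma aux_comap_perp {n k : ℕ} {U : Submodule ℂ (PS n)} (hU : U ≤ hsub n k) :
    Submodule.comap (hsub n k).subtype (perp n k U)
      = (pairB n k).orthogonal (Submodule.comap (hsub n k).subtype U) := by
  ext x
  simp only [Submodule.mem_comap, Submodule.subtype_apply, aux_mem_perp,
    LinearMap.BilinForm.mem_orthogonal_iff]
  constructor
  · rintro ⟨-, h⟩ y hy
    exact h y.1 hy
  · intro h
    exact ⟨x.2, fun f hf => h ⟨f, hU hf⟩ hf⟩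

lemma aux_finrank_comap {n k : ℕ} {U : Submodule ℂ (PS n)} (hU : U ≤ hsub n k) :
    Module.finrank ℂ ↥(Submodule.comap (hsub n k).subtype U) = Module.finrank ℂ ↥U :=
  (Submodule.comapSubtypeEquivOfLe hU).finrank_eq

lemma aux_finrank_le_hsub {n k : ℕ} {U : Submodule ℂ (PS n)} (hU : U ≤ hsub n k) :
    Module.finrank ℂ ↥U ≤ Module.finrank ℂ ↥(hsub n k) := by
  rw [← aux_finrank_comap hU]
  exact Submodule.finrank_le _

lemma aux_perp_finrank {n k : ℕ} {U : Submodule ℂ (PS n)} (hU : U ≤ hsub n k) :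
    Module.finrank ℂ ↥(perp n k U)
      = Module.finrank ℂ ↥(hsub n k) - Module.finrank ℂ ↥U := by
  rw [← aux_finrank_comap (aux_perp_le n k U), aux_comap_perp hU,
    LinearMap.BilinForm.finrank_orthogonal (aux_pairB_nondeg n k),
    aux_finrank_comap hU]

lemma aux_iSup_inf_hsub {n : ℕ} (V : ℕ → Submodule ℂ (PS n))
    (hV : ∀ k', V k' ≤ hsub n k') (k : ℕ) :
    (⨆ k', V k') ⊓ hsub n k = V k := by
  refine le_antisymm ?_ (le_inf (le_iSup V k) (hV k))
  intro p hp
  rw [Submodule.mem_inf] at hp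
  obtain ⟨hp1, hp2⟩ := hp
  have key : (⨆ k', V k')
      ≤ Submodule.comap (homogeneousComponent k : PS n →ₗ[ℂ] PS n) (V k) := by
    refine iSup_le fun k' q hq => ?_
    simp only [Submodule.mem_comap]
    rw [homogeneousComponent_of_mem (hV k' hq)]
    by_cases h : k = k'
    · subst h; simpa using hq
    · simp [h]
  have hk := key hp1
  simp only [Submodule.mem_comap] at hk
  rwa [homogeneousComponent_of_mem hp2, if_pos rfl] at hk

lemma aux_spanMon_le {n k : ℕ} {M : Finset (Fin (n + 1) →₀ ℕ)}
    (hM : ∀ u ∈ M, ∑ j, u j = k) : spanMon n M ≤ hsub n k := by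
  rw [spanMon, Submodule.span_le]
  rintro p ⟨u, hu, rfl⟩
  exact (mem_homogeneousSubmodule _ _).mpr
    (isHomogeneous_monomial 1 (by rw [aux_degree_eq_sum]; exact hM u hu))

end Aux

/-- Proposition 4.3(b): the graded subspace `I` built from `J` by enlarging each graded piece
`J_k` (for `a ≤ k ≤ b`) by the largest monomials satisfies
`dim (S/I)_k = min(dim S_k, r)` for every `k`. -/
theorem lifted_subspace_has_generic_hilbert_function (n r : ℕ) (hn : 1 ≤ n) (hr : 2 ≤ r)
    (lo : LinearOrder (Fin (n + 1) →₀ ℕ))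
    (hlo : ∀ u v w : Fin (n + 1) →₀ ℕ, lo.lt u v → lo.lt (u + w) (v + w))
    (J : Ideal (PS n)) (hJne : J ≠ ⊤) (hJhom : IsHomog n J)
    (hmono : ∀ k : ℕ, HF n J k ≤ HF n J (k + 1))
    (hstab : ∃ N : ℕ, ∀ k, N ≤ k → HF n J k = r)
    (a b : ℕ)
    (ha : r ≤ Module.finrank ℂ ↥(hsub n a) ∧
      ∀ a' < a, Module.finrank ℂ ↥(hsub n a') < r)
    (hb : HF n J b ≠ r ∧ ∀ k, b < k → HF n J k = r)
    (M : ℕ → Finset (Fin (n + 1) →₀ ℕ))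
    (hM : ∀ k, a ≤ k → k ≤ b →
      TopSeg n k lo (M k) ∧
      Module.finrank ℂ ↥(Wsp n J M k) = r ∧
      ∀ M' : Finset (Fin (n + 1) →₀ ℕ), TopSeg n k lo M' → M'.card < (M k).card →
        Module.finrank ℂ ↥(perp n k (idealPiece n J k) ⊔ spanMon n M') ≠ r) :
    ∀ k : ℕ,
      Module.finrank ℂ ↥(hsub n k) -
          Module.finrank ℂ ↥((⨆ k' : ℕ, Ipiece n J M a b k') ⊓ hsub n k) =
        min (Module.finrank ℂ ↥(hsub n k)) r := by
  intro k
  have hVle : ∀ k', Ipiece n J M a b k' ≤ hsub n k' := by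
    intro k'
    exact sup_le (iSup_le fun _ => aux_perp_le _ _ _) (iSup_le fun _ => inf_le_right)
  rw [aux_iSup_inf_hsub _ hVle k]
  by_cases hak : a ≤ k
  · by_cases hkb : k ≤ b
    · obtain ⟨hTS, hW, -⟩ := hM k hak hkb
      have hWle : Wsp n J M k ≤ hsub n k :=
        sup_le (aux_perp_le _ _ _) (aux_spanMon_le hTS.1)
      have hIk : Ipiece n J M a b k = perp n k (Wsp n J M k) := by
        rw [Ipiece, iSup_pos ⟨hak, hkb⟩, iSup_neg (by omega : ¬ b < k), sup_bot_eq]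
      have hrd : r ≤ Module.finrank ℂ ↥(hsub n k) := hW ▸ aux_finrank_le_hsub hWle
      rw [hIk, aux_perp_finrank hWle, hW]
      omega
    · have hbk : b < k := by omega
      have hIk : Ipiece n J M a b k = idealPiece n J k := by
        rw [Ipiece, iSup_neg (fun h => hkb h.2), iSup_pos hbk, bot_sup_eq]
      have hHF := hb.2 k hbk
      rw [HF] at hHF
      rw [hIk]
      omega
  · have hka : k < a := by omega
    have hbk : ¬ b < k := by
      intro hbk
      have hHF := hb.2 k hbk
      rw [HF] at hHF
      have hd := ha.2 k hka
      omega
    have hIk : Ipiece n J M a b k = ⊥ := by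
      rw [Ipiece, iSup_neg (fun h => hak h.1), iSup_neg hbk, bot_sup_eq]
    rw [hIk, finrank_bot]
    have hd := ha.2 k hka
    omega
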